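/- Let M = J_n(-1) be the n×n Jordan block with eigenvalue -1 and digit set D = {(0,...,0,1)^T, (0,...,0)^T}. Then (M, D) is a full number system: every vector in Z^n can be written as sum_{i=0}^{k-1} M^i d_i with d_i ∈ D. -/

import Mathlib

/-- The `n × n` Jordan block with eigenvalue `-1`: `-1` on the diagonal, `1` on the
superdiagonal, `0` elsewhere. -/
def Jneg (n : ℕ) : Matrix (Fin n) (Fin n) ℤ :=
  Matrix.of fun i j => if j = i then -1 else if (j : ℕ) = (i : ℕ) + 1 then 1 else 0

/-- The digit `p = (0, …, 0, 1)ᵀ`. -/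
def pvec (n : ℕ) : Fin n → ℤ := fun i => if (i : ℕ) = n - 1 then 1 else 0

/-- The vector represented by a word `d_{k-1} … d_0`, namely `∑ M^i d_i` with `M = Jneg n`. -/
def valJ (n : ℕ) {k : ℕ} (d : Fin k → (Fin n → ℤ)) : Fin n → ℤ :=
  ∑ i : Fin k, ((Jneg n) ^ (i : ℕ)).mulVec (d i)

namespace NS
variable (n : ℕ)

lemma mulVec_apply (x : Fin n → ℤ) (i : Fin n) :
    (Jneg n).mulVec x i = -x i + (if h : (i:ℕ)+1 < n then x ⟨(i:ℕ)+1, h⟩ else 0) := by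
  unfold Jneg Matrix.mulVec dotProduct
  simp only [Matrix.of_apply]
  have key : ∀ j : Fin n, (if j = i then (-1:ℤ) else if (j:ℕ) = (i:ℕ)+1 then 1 else 0) * x j
      = (if j = i then -x j else 0) + (if (j:ℕ) = (i:ℕ)+1 then x j else 0) := by
    intro j
    by_cases h1 : j = i
    · subst h1
      have h2 : ¬((j:ℕ) = (j:ℕ)+1) := by omega
      simp [h2]
    · by_cases h2 : (j:ℕ) = (i:ℕ)+1 <;> simp [h1, h2]
  rw [Finset.sum_congr rfl (fun j _ => key j), Finset.sum_add_distrib]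
  congr 1
  · rw [Finset.sum_ite_eq' Finset.univ i (fun j => -x j)]; simp
  · by_cases h : (i:ℕ)+1 < n
    · rw [dif_pos h]
      have e : ∀ j : Fin n, ((j:ℕ) = (i:ℕ)+1) ↔ (j = ⟨(i:ℕ)+1, h⟩) := by
        intro j; rw [Fin.ext_iff]
      rw [Finset.sum_congr rfl (fun j _ => by rw [if_congr (e j) rfl rfl])]
      rw [Finset.sum_ite_eq' Finset.univ (⟨(i:ℕ)+1, h⟩ : Fin n) (fun j => x j)]
      simp
    · rw [dif_neg h]
      apply Finset.sum_eq_zero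
      intro j _
      have hj : (j:ℕ) ≠ (i:ℕ)+1 := by have := j.isLt; omega
      simp [hj]

def Low (j : ℕ) (x : Fin n → ℤ) : Prop := ∀ i : Fin n, n - j ≤ (i:ℕ) → x i = 0

def Val (j : ℕ) (x : Fin n → ℤ) : ℤ :=
  if h : 0 < n then x ⟨n - 1 - j, by omega⟩ else 0

variable {n}

lemma low_zero (j : ℕ) : Low n j 0 := fun _ _ => rfl

lemma low_add {j : ℕ} {x y : Fin n → ℤ} (hx : Low n j x) (hy : Low n j y) :
    Low n j (x + y) := fun i hi => by
  simp only [Pi.add_apply, hx i hi, hy i hi, add_zero]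

lemma val_zero (j : ℕ) : Val n j (0 : Fin n → ℤ) = 0 := by
  unfold Val; split <;> rfl

lemma val_add (j : ℕ) (x y : Fin n → ℤ) : Val n j (x + y) = Val n j x + Val n j y := by
  unfold Val; split <;> simp

lemma val_apply (hn : 0 < n) (j : ℕ) (x : Fin n → ℤ) :
    Val n j x = x ⟨n - 1 - j, by omega⟩ := dif_pos hn

lemma low_mul {j : ℕ} {x : Fin n → ℤ} (hx : Low n j x) :
    Low n j ((Jneg n).mulVec x) := by
  intro i hi
  rw [mulVec_apply, hx i hi]
  split
  · next h => rw [hx ⟨(i:ℕ)+1, h⟩ (by simp; omega)]; ring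
  · ring

lemma val_mul {j : ℕ} (hj : j < n) {x : Fin n → ℤ} (hx : Low n j x) :
    Val n j ((Jneg n).mulVec x) = - Val n j x := by
  have hn : 0 < n := by omega
  unfold Val
  rw [dif_pos hn, dif_pos hn, mulVec_apply]
  have : ∀ (h : (n-1-j)+1 < n), x ⟨n-1-j+1, h⟩ = 0 := by
    intro h
    exact hx _ (by simp; omega)
  split
  · next h => rw [this h]; ring
  · ring

lemma low_pow {j : ℕ} (k : ℕ) {x : Fin n → ℤ} (hx : Low n j x) :
    Low n j (((Jneg n)^k).mulVec x) := by
  induction k with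
  | zero => simpa using hx
  | succ k ih =>
      rw [pow_succ', ← Matrix.mulVec_mulVec]
      exact low_mul ih

lemma val_pow {j : ℕ} (hj : j < n) (k : ℕ) {x : Fin n → ℤ} (hx : Low n j x) :
    Val n j (((Jneg n)^k).mulVec x) = (-1)^k * Val n j x := by
  induction k with
  | zero => simp
  | succ k ih =>
      rw [pow_succ', ← Matrix.mulVec_mulVec, val_mul hj (low_pow k hx), ih]
      ring

lemma low_N {j : ℕ} {x : Fin n → ℤ} (hx : Low n j x) :
    Low n (j+1) (x + (Jneg n).mulVec x) := by
  intro i hi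
  simp only [Pi.add_apply]
  rw [mulVec_apply]
  split
  · next h => rw [hx ⟨(i:ℕ)+1, h⟩ (show n - j ≤ (i:ℕ)+1 by omega)]; ring
  · ring

lemma val_N {j : ℕ} (hj : j + 1 < n) {x : Fin n → ℤ} :
    Val n (j+1) (x + (Jneg n).mulVec x) = Val n j x := by
  have hn : 0 < n := by omega
  unfold Val
  rw [dif_pos hn, dif_pos hn]
  simp only [Pi.add_apply]
  rw [mulVec_apply]
  rw [dif_pos (show (n-1-(j+1))+1 < n by omega)]
  have e : (⟨n-1-(j+1)+1, by omega⟩ : Fin n) = ⟨n-1-j, by omega⟩ := by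
    apply Fin.ext; simp; omega
  rw [e]
  ring

/-- `M²x - x` : level raises with value `-2c`. -/

lemma low_w {j : ℕ} {x : Fin n → ℤ} (hx : Low n j x) :
    Low n (j+1) ((Jneg n).mulVec ((Jneg n).mulVec x) - x) := by
  intro i hi
  simp only [Pi.sub_apply]
  rw [mulVec_apply, mulVec_apply]
  split
  · next h1 =>
    rw [mulVec_apply, hx ⟨(i:ℕ)+1, h1⟩ (show n - j ≤ (i:ℕ)+1 by omega)]
    split
    · next h2 => rw [hx ⟨(i:ℕ)+1+1, h2⟩ (show n - j ≤ (i:ℕ)+1+1 by omega)]; ring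
    · ring
  · ring

lemma val_w {j : ℕ} (hj : j + 1 < n) {x : Fin n → ℤ} (hx : Low n j x) :
    Val n (j+1) ((Jneg n).mulVec ((Jneg n).mulVec x) - x) = -2 * Val n j x := by
  have hn : 0 < n := by omega
  unfold Val
  rw [dif_pos hn, dif_pos hn]
  simp only [Pi.sub_apply]
  have h01 : (n-1-(j+1))+1 < n := by omega
  rw [mulVec_apply]
  rw [dif_pos h01]
  rw [mulVec_apply, mulVec_apply]
  rw [dif_pos h01]
  have e : (⟨n-1-(j+1)+1, by omega⟩ : Fin n) = ⟨n-1-j, by omega⟩ := by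
    apply Fin.ext; simp; omega
  rw [e]
  split
  · next h2 =>
    rw [hx ⟨n-1-j+1, h2⟩ (show n - j ≤ n-1-j+1 by omega)]
    ring
  · ring

/-- the raise lemma : for odd `m = 2l+1`, `x + M^m x` goes one level up with value `m·c`. -/
lemma raise {j : ℕ} (hj : j + 1 < n) {x : Fin n → ℤ} (hx : Low n j x) (l : ℕ) :
    Low n (j+1) (x + ((Jneg n)^(2*l+1)).mulVec x) ∧
    Val n (j+1) (x + ((Jneg n)^(2*l+1)).mulVec x) = (2*(l:ℤ)+1) * Val n j x := by
  induction l with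
  | zero =>
      simp only [Nat.mul_zero, Nat.zero_add, pow_one]
      exact ⟨low_N hx, by rw [val_N hj]; ring⟩
  | succ l ih =>
      have key : x + ((Jneg n)^(2*(l+1)+1)).mulVec x
          = (x + ((Jneg n)^(2*l+1)).mulVec x)
            + ((Jneg n)^(2*l+1)).mulVec ((Jneg n).mulVec ((Jneg n).mulVec x) - x) := by
        rw [Matrix.mulVec_sub, Matrix.mulVec_mulVec, Matrix.mulVec_mulVec]
        have e : (Jneg n)^(2*l+1) * Jneg n * Jneg n = (Jneg n)^(2*(l+1)+1) := by
          rw [← pow_succ, ← pow_succ, show 2*l+1+1+1 = 2*(l+1)+1 by ring]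
        rw [e]
        abel
      rw [key]
      constructor
      · exact low_add ih.1 (low_pow _ (low_w hx))
      · rw [val_add, ih.2, val_pow hj _ (low_w hx), val_w hj hx]
        have : ((-1:ℤ))^(2*l+1) = -1 := Odd.neg_one_pow ⟨l, by ring⟩
        rw [this]
        push_cast
        ring

variable (n)

def zs (S : Finset ℕ) : Fin n → ℤ := ∑ i ∈ S, ((Jneg n)^i).mulVec (pvec n)

variable {n}

lemma zs_empty : zs n ∅ = 0 := Finset.sum_empty

lemma zs_union {S T : Finset ℕ} (h : Disjoint S T) :
    zs n (S ∪ T) = zs n S + zs n T := Finset.sum_union h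

lemma zs_image (k : ℕ) (S : Finset ℕ) :
    zs n (S.image (· + k)) = ((Jneg n)^k).mulVec (zs n S) := by
  unfold zs
  rw [Finset.sum_image (by intro a _ b _ h; dsimp only at h; omega)]
  rw [show ((Jneg n)^k).mulVec (∑ i ∈ S, ((Jneg n)^i).mulVec (pvec n))
      = ((Jneg n)^k).mulVecLin (∑ i ∈ S, ((Jneg n)^i).mulVec (pvec n)) from rfl]
  rw [map_sum]
  apply Finset.sum_congr rfl
  intro i _
  rw [Matrix.mulVecLin_apply, Matrix.mulVec_mulVec, ← pow_add, Nat.add_comm]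

def Ach (n j : ℕ) (c : ℤ) : Prop :=
  ∀ N : ℕ, ∃ S : Finset ℕ, (∀ i ∈ S, N ≤ i) ∧ Low n j (zs n S) ∧ Val n j (zs n S) = c

lemma ach_zero (j : ℕ) : Ach n j 0 := fun _ =>
  ⟨∅, by simp, by rw [zs_empty]; exact low_zero j, by rw [zs_empty]; exact val_zero j⟩

lemma ach_add {j : ℕ} {c c' : ℤ} (h : Ach n j c) (h' : Ach n j c') : Ach n j (c + c') := by
  intro N
  obtain ⟨S, hS, hL, hV⟩ := h N
  obtain ⟨T, hT, hL', hV'⟩ := h' (max (S.sup id + 1) N)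
  have hd : Disjoint S T := by
    rw [Finset.disjoint_left]
    intro a haS haT
    have h1 : a ≤ S.sup id := Finset.le_sup (f := id) haS
    have h2 := hT a haT
    omega
  refine ⟨S ∪ T, ?_, ?_, ?_⟩
  · intro i hi
    rcases Finset.mem_union.1 hi with h | h
    · exact hS i h
    · have := hT i h; omega
  · rw [zs_union hd]; exact low_add hL hL'
  · rw [zs_union hd, val_add, hV, hV']

lemma ach_neg {j : ℕ} (hj : j < n) {c : ℤ} (h : Ach n j c) : Ach n j (-c) := by
  intro N
  obtain ⟨S, hS, hL, hV⟩ := h N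
  refine ⟨S.image (· + 1), ?_, ?_, ?_⟩
  · intro i hi
    obtain ⟨a, haS, rfl⟩ := Finset.mem_image.1 hi
    have := hS a haS; omega
  · rw [zs_image, pow_one]; exact low_mul hL
  · rw [zs_image, pow_one, val_mul hj hL, hV]

lemma ach_nsmul {j : ℕ} {c : ℤ} (h : Ach n j c) : ∀ k : ℕ, Ach n j (k * c) := by
  intro k
  induction k with
  | zero => simpa using ach_zero j
  | succ k ih =>
      have h2 := ach_add ih h
      rw [show (((k+1:ℕ)):ℤ) * c = (k:ℤ) * c + c by push_cast; ring]
      exact h2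

lemma ach_one (hn : 0 < n) : Ach n 0 1 := by
  intro N
  refine ⟨{2 * N}, ?_, ?_, ?_⟩
  · intro i hi; rw [Finset.mem_singleton] at hi; omega
  · intro i hi; have := i.isLt; omega
  · unfold zs
    rw [Finset.sum_singleton]
    have hp : Low n 0 (pvec n) := fun i hi => absurd i.isLt (by omega)
    rw [val_pow hn _ hp]
    have : ((-1:ℤ))^(2*N) = 1 := by
      rw [pow_mul]; norm_num
    rw [this, one_mul]
    rw [val_apply hn]
    unfold pvec
    simp

lemma ach_base (hn : 0 < n) (c : ℤ) : Ach n 0 c := by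
  have hk : ∀ k : ℕ, Ach n 0 (k : ℤ) := by
    intro k
    have := ach_nsmul (ach_one hn) k
    simpa using this
  rcases le_or_gt 0 c with h | h
  · have : c = ((c.toNat : ℤ)) := by omega
    rw [this]; exact hk _
  · have : c = -(((-c).toNat : ℤ)) := by omega
    rw [this]; exact ach_neg hn (hk _)

lemma ach_two {j : ℕ} (hj : j + 1 < n) {c : ℤ} (h : Ach n j c) : Ach n (j+1) (2 * c) := by
  intro N
  obtain ⟨SA, hSA, hLA, hVA⟩ := h N
  set BA := max (SA.sup id) N with hBA
  have hSAub : ∀ a ∈ SA, a ≤ BA := fun a ha =>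
    le_trans (Finset.le_sup (f := id) ha) (le_max_left _ _)
  obtain ⟨SB, hSB, hLB, hVB⟩ := h (BA + 2)
  set BB := max (SB.sup id) (BA + 2) with hBB
  have hSBub : ∀ b ∈ SB, b ≤ BB := fun b hb =>
    le_trans (Finset.le_sup (f := id) hb) (le_max_left _ _)
  set m := 2 * BB + 1 with hm
  -- the four blocks
  set T1 := SA ∪ SA.image (· + (m+2)) with hT1
  set T2 := SB.image (· + 1) ∪ SB.image (· + (m+1)) with hT2
  have hd1 : Disjoint SA (SA.image (· + (m+2))) := by
    rw [Finset.disjoint_left]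
    intro a ha ha'
    obtain ⟨b, hb, hba⟩ := Finset.mem_image.1 ha'
    have := hSAub a ha; omega
  have hd2 : Disjoint (SB.image (· + 1)) (SB.image (· + (m+1))) := by
    rw [Finset.disjoint_left]
    intro a ha ha'
    obtain ⟨b, hb, hba⟩ := Finset.mem_image.1 ha
    obtain ⟨b', hb', hba'⟩ := Finset.mem_image.1 ha'
    have := hSBub b hb; have := hSB b' hb'; omega
  have hd12 : Disjoint T1 T2 := by
    rw [Finset.disjoint_left]
    intro a ha ha'
    rw [hT1, Finset.mem_union] at ha
    rw [hT2, Finset.mem_union] at ha'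
    have k1 : a ≤ BA ∨ (m+2 ≤ a ∧ a ≤ BA + (m+2)) := by
      rcases ha with h1 | h1
      · exact Or.inl (hSAub a h1)
      · obtain ⟨b, hb, hba⟩ := Finset.mem_image.1 h1
        have := hSA b hb; have := hSAub b hb; omega
    have k2 : (BA + 2 + 1 ≤ a ∧ a ≤ BB + 1) ∨ (BA + 2 + (m+1) ≤ a) := by
      rcases ha' with h1 | h1
      · obtain ⟨b, hb, hba⟩ := Finset.mem_image.1 h1
        have := hSB b hb; have := hSBub b hb; omega
      · obtain ⟨b, hb, hba⟩ := Finset.mem_image.1 h1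
        have := hSB b hb; omega
    omega
  have RA := raise hj hLA (BB+1)
  rw [show 2*(BB+1)+1 = m + 2 by omega] at RA
  have RB := raise hj hLB BB
  rw [show 2*BB+1 = m by omega] at RB
  have e2 : ((Jneg n)^1).mulVec (zs n SB) + ((Jneg n)^(m+1)).mulVec (zs n SB)
      = (Jneg n).mulVec (zs n SB + ((Jneg n)^m).mulVec (zs n SB)) := by
    rw [Matrix.mulVec_add, Matrix.mulVec_mulVec, pow_one, ← pow_succ']
  refine ⟨T1 ∪ T2, ?_, ?_, ?_⟩
  · intro i hi
    rcases Finset.mem_union.1 hi with h1 | h1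
    · rw [hT1, Finset.mem_union] at h1
      rcases h1 with h1 | h1
      · exact hSA i h1
      · obtain ⟨b, hb, rfl⟩ := Finset.mem_image.1 h1; have := hSA b hb; omega
    · rw [hT2, Finset.mem_union] at h1
      rcases h1 with h1 | h1 <;>
        · obtain ⟨b, hb, rfl⟩ := Finset.mem_image.1 h1; have := hSB b hb; omega
  · rw [zs_union hd12, zs_union hd1, zs_union hd2, zs_image, zs_image, zs_image]
    apply low_add
    · exact RA.1
    · rw [e2]; exact low_mul RB.1
  · rw [zs_union hd12, zs_union hd1, zs_union hd2, zs_image, zs_image, zs_image]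
    rw [val_add, e2, RA.2, val_mul hj RB.1, RB.2, hVA, hVB]
    push_cast
    ring

lemma ach_raise {j : ℕ} (hj : j + 1 < n) (h : ∀ c, Ach n j c) (c : ℤ) : Ach n (j+1) c := by
  intro N
  obtain ⟨SA, hSA, hLA, hVA⟩ := h c N
  set B := SA.sup id with hB
  have hSAub : ∀ a ∈ SA, a ≤ B := fun a ha => Finset.le_sup (f := id) ha
  set m1 := 2 * B + 1 with hm1
  have hd1 : Disjoint SA (SA.image (· + m1)) := by
    rw [Finset.disjoint_left]
    intro a ha ha'
    obtain ⟨b, hb, hba⟩ := Finset.mem_image.1 ha'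
    have := hSAub a ha; have := hSA b hb; omega
  -- the compensation : B * (2 * (-c))
  have hcomp : Ach n (j+1) ((B : ℤ) * (2 * (-c))) :=
    ach_nsmul (ach_two hj (ach_neg (by omega) (h c))) B
  obtain ⟨S2, hS2, hL2, hV2⟩ := hcomp (max (B + m1 + 1) N)
  have hd2 : Disjoint (SA ∪ SA.image (· + m1)) S2 := by
    rw [Finset.disjoint_left]
    intro a ha ha'
    have h2 := hS2 a ha'
    rcases Finset.mem_union.1 ha with h1 | h1
    · have := hSAub a h1; omega
    · obtain ⟨b, hb, rfl⟩ := Finset.mem_image.1 h1; have := hSAub b hb; omega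
  refine ⟨(SA ∪ SA.image (· + m1)) ∪ S2, ?_, ?_, ?_⟩
  · intro i hi
    rcases Finset.mem_union.1 hi with h1 | h1
    · rcases Finset.mem_union.1 h1 with h1 | h1
      · exact hSA i h1
      · obtain ⟨b, hb, rfl⟩ := Finset.mem_image.1 h1; have := hSA b hb; omega
    · have := hS2 i h1; omega
  · rw [zs_union hd2, zs_union hd1, zs_image]
    exact low_add (raise hj hLA B).1 hL2
  · rw [zs_union hd2, zs_union hd1, zs_image, val_add, (raise hj hLA B).2, hVA, hV2]
    push_cast
    ring

lemma ach_all : ∀ (j : ℕ), j < n → ∀ c : ℤ, Ach n j c := by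
  intro j
  induction j with
  | zero => exact fun hj c => ach_base hj c
  | succ j ih => exact fun hj c => ach_raise hj (fun c' => ih (by omega) c') c

lemma main_rep : ∀ (d j : ℕ), j + d = n → ∀ x : Fin n → ℤ, Low n j x →
    ∀ N : ℕ, ∃ S : Finset ℕ, (∀ i ∈ S, N ≤ i) ∧ zs n S = x := by
  intro d
  induction d with
  | zero =>
      intro j hj x hx N
      refine ⟨∅, by simp, ?_⟩
      rw [zs_empty]
      funext i
      exact (hx i (by omega)).symm
  | succ d ih =>
      intro j hj x hx N
      have hjn : j < n := by omega
      obtain ⟨S1, hb1, hL1, hV1⟩ := ach_all j hjn (Val n j x) N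
      have hlow : Low n (j+1) (x - zs n S1) := by
        intro i hi
        simp only [Pi.sub_apply]
        rcases le_or_gt (n - j) (i : ℕ) with h | h
        · rw [hx i h, hL1 i h, sub_zero]
        · have hi' : i = (⟨n - 1 - j, by omega⟩ : Fin n) := by
            apply Fin.ext; simp; omega
          have hn0 : 0 < n := by omega
          have hvx : x i = Val n j x := by
            rw [hi']; exact (val_apply hn0 j x).symm
          have hvz : zs n S1 i = Val n j x := by
            rw [hi', ← hV1]; exact (val_apply hn0 j (zs n S1)).symm
          rw [hvx, hvz, sub_self]
      obtain ⟨S2, hb2, hz2⟩ := ih (j+1) (by omega) (x - zs n S1) hlow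
        (max (S1.sup id + 1) N)
      have hd : Disjoint S1 S2 := by
        rw [Finset.disjoint_left]
        intro a ha ha'
        have h1 : a ≤ S1.sup id := Finset.le_sup (f := id) ha
        have h2 := hb2 a ha'
        omega
      refine ⟨S1 ∪ S2, ?_, ?_⟩
      · intro i hi
        rcases Finset.mem_union.1 hi with h1 | h1
        · exact hb1 i h1
        · have := hb2 i h1; omega
      · rw [zs_union hd, hz2]
        abel

end NS

theorem stmt9 (n : ℕ) (x : Fin n → ℤ) :
    ∃ (k : ℕ) (d : Fin k → (Fin n → ℤ)),
      (∀ i, d i = pvec n ∨ d i = 0) ∧ valJ n d = x := by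
  rcases Nat.eq_zero_or_pos n with rfl | hn
  · refine ⟨0, fun i => 0, fun i => Or.inr rfl, ?_⟩
    funext i
    exact absurd i.isLt (by omega)
  · obtain ⟨S, _, hS⟩ := NS.main_rep n 0 (by omega) x
      (fun i hi => absurd hi (by have := i.isLt; omega)) 0
    set k := S.sup id + 1 with hk
    have hSub : ∀ a ∈ S, a < k := fun a ha =>
      Nat.lt_succ_of_le (Finset.le_sup (f := id) ha)
    refine ⟨k, fun i => if (i : ℕ) ∈ S then pvec n else 0, fun i => by
      dsimp only; split <;> [exact Or.inl rfl; exact Or.inr rfl], ?_⟩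
    unfold valJ
    have step1 : ∀ i : Fin k,
        ((Jneg n)^(i:ℕ)).mulVec (if (i:ℕ) ∈ S then pvec n else 0)
          = (if (i:ℕ) ∈ S then ((Jneg n)^(i:ℕ)).mulVec (pvec n) else 0) := by
      intro i
      split
      · rfl
      · exact Matrix.mulVec_zero _
    rw [Finset.sum_congr rfl (fun i _ => step1 i)]
    rw [Fin.sum_univ_eq_sum_range (fun i => if i ∈ S then ((Jneg n)^i).mulVec (pvec n) else 0) k]
    rw [Finset.sum_ite_mem, ← hS]
    unfold NS.zs
    apply Finset.sum_congr
    · rw [Finset.inter_eq_right]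
      intro a ha
      exact Finset.mem_range.2 (hSub a ha)
    · intros; rfl
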